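/- arXiv:1611.06833 — 4 statements merged into one kernel-verified Lean document; each statement's English description precedes it below -/
import Mathlib

section
/- If all electors in S have the same representation r k = n_i / w_i where w_i = ∑_{k∈S} u k and n_i ∈ ℕ, then 2 * φ_i = (2 * n_i + 1) / w_i, where 2 * φ_i = w_i * ρ_i^2 - ∑_{k∈S} u k * (r k)^2 and ρ_i = ((∑_{k∈S} u k * r k) + 1)/w_i. -/
open Finset

theorem sainte_lague_value
    {K : Type*} [Fintype K] [Nonempty K]
    (u r : K → ℝ) (nᵢ : ℕ)
    (hu : ∀ k, 0 < u k)
    (hr : ∀ k, r k = (nᵢ : ℝ) / (∑ k, u k))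
    (ρ : ℝ) (hρ : ρ = ((∑ k, u k * r k) + 1) / (∑ k, u k)) :
    (∑ k, u k) * ρ ^ 2 - ∑ k, u k * (r k) ^ 2
      = (2 * (nᵢ : ℝ) + 1) / (∑ k, u k) := by
  have hw : 0 < ∑ k, u k := Finset.sum_pos (fun k _ => hu k) univ_nonempty
  set w := ∑ k, u k with hwdef
  have h1 : ∑ k, u k * r k = (nᵢ : ℝ) := by
    simp only [hr, mul_div_assoc]
    rw [← Finset.sum_mul, ← hwdef]
    field_simp
  have h2 : ∑ k, u k * (r k) ^ 2 = (nᵢ : ℝ)^2 / w := by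
    simp only [hr, ← hwdef, div_pow, mul_div_assoc]
    rw [← Finset.sum_mul]
    rw [← hwdef]
    field_simp
  rw [hρ, h1, h2]
  field_simp
  ring
end

section
/- Let u : S → ℝ positive, r : S → ℝ, w = ∑_{k∈S} u k, ρ = ((∑_{k∈S} u k r k)+1)/w. If r k ≤ ρ for all k ∈ S, then the distribution x k = ρ - r k satisfies all constraints: x k ≥ 0, ∑_{k∈S} u k x k = 1, and it minimizes ∑ u k (r k + x k)² among nonnegative feasible distributions. -/
open Finset

theorem positivity_condition_sufficient
    {K : Type*} [Fintype K] [Nonempty K]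
    (u r : K → ℝ)
    (hu : ∀ k, 0 < u k)
    (ρ : ℝ) (hρ : ρ = ((∑ k, u k * r k) + 1) / (∑ k, u k))
    (hpos : ∀ k, r k ≤ ρ) :
    (∀ k, 0 ≤ ρ - r k) ∧
    (∑ k, u k * (ρ - r k) = 1) ∧
    (∀ y : K → ℝ, (∀ k, 0 ≤ y k) → (∑ k, u k * y k = 1) →
      (∑ k, u k * (r k + (ρ - r k)) ^ 2) ≤ ∑ k, u k * (r k + y k) ^ 2) := by
  have hw : 0 < ∑ k, u k := Finset.sum_pos (fun k _ => hu k) univ_nonempty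
  have hsum : ∑ k, u k * (ρ - r k) = 1 := by
    have : ∑ k, u k * (ρ - r k) = (∑ k, u k) * ρ - ∑ k, u k * r k := by
      rw [Finset.sum_mul]
      rw [← Finset.sum_sub_distrib]
      congr 1; ext k; ring
    rw [this, hρ]
    field_simp
    ring
  refine ⟨fun k => sub_nonneg.mpr (hpos k), hsum, fun y hy hys => ?_⟩
  have key : ∀ k, u k * (r k + (ρ - r k)) ^ 2 + u k * (2 * ρ * (r k + y k - ρ)) ≤
      u k * (r k + y k) ^ 2 := by
    intro k
    have h1 : 0 ≤ u k * (r k + y k - ρ) ^ 2 := mul_nonneg (hu k).le (sq_nonneg _)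
    nlinarith [h1]
  calc ∑ k, u k * (r k + (ρ - r k)) ^ 2
      = ∑ k, (u k * (r k + (ρ - r k)) ^ 2 + u k * (2 * ρ * (r k + y k - ρ))) := by
        rw [Finset.sum_add_distrib]
        have : ∑ k, u k * (2 * ρ * (r k + y k - ρ)) = 0 := by
          have expand : ∑ k, u k * (2 * ρ * (r k + y k - ρ)) =
              2 * ρ * ((∑ k, u k * r k) + (∑ k, u k * y k) - (∑ k, u k) * ρ) := by
            rw [Finset.sum_mul, ← Finset.sum_add_distrib, ← Finset.sum_sub_distrib,
              Finset.mul_sum]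
            congr 1; ext k; ring
          rw [expand, hys, hρ]
          field_simp
          ring
        rw [this, add_zero]
    _ ≤ ∑ k, u k * (r k + y k) ^ 2 := Finset.sum_le_sum (fun k _ => key k)
end

section
/- Suppose x minimizes φ(x) = (1/2)∑_{k∈S} u k (2 r k x k + x k²) subject to x k ≥ 0 and ∑ u k x k = 1. Then there exists ρ such that for every k ∈ S: if x k > 0 then r k + x k = ρ, and if x k = 0 then r k ≥ ρ. -/
open Finset

theorem kkt_characterization
    {K : Type*} [Fintype K] [Nonempty K]
    (u r : K → ℝ)
    (hu : ∀ k, 0 < u k)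
    (x : K → ℝ) (hxpos : ∀ k, 0 ≤ x k) (hx : ∑ k, u k * x k = 1)
    (hmin : ∀ y : K → ℝ, (∀ k, 0 ≤ y k) → (∑ k, u k * y k = 1) →
      (1 / 2) * (∑ k, u k * (2 * r k * x k + (x k) ^ 2))
        ≤ (1 / 2) * ∑ k, u k * (2 * r k * y k + (y k) ^ 2)) :
    ∃ ρ : ℝ, ∀ k, (0 < x k → r k + x k = ρ) ∧ (x k = 0 → ρ ≤ r k) := by
  classical
  -- key monotonicity lemma
  have key : ∀ i j : K, 0 < x i → r i + x i ≤ r j + x j := by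
    intro i j hi
    by_cases hij : i = j
    · subst hij; exact le_refl _
    · -- perturbation inequality
      have h1 : ∀ ε : ℝ, 0 < ε → ε ≤ u i * x i →
          0 ≤ 2*ε*((r j + x j) - (r i + x i)) + ε^2*(1/u j + 1/u i) := by
        intro ε hε hεle
        set y : K → ℝ := fun k =>
          x k + (if k = j then ε / u j else 0) - (if k = i then ε / u i else 0) with hy
        have hynn : ∀ k, 0 ≤ y k := by
          intro k
          by_cases hkj : k = j
          · subst hkj
            simp [hy, Ne.symm hij]
            have h1 := hxpos k
            have h2 : 0 ≤ ε / u k := le_of_lt (div_pos hε (hu k))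
            linarith
          · by_cases hki : k = i
            · subst hki
              simp [hy, hkj]
              rw [div_le_iff₀ (hu k)]
              linarith [hεle]
            · simp [hy, hkj, hki]; exact hxpos k
        have hysum : ∑ k, u k * y k = 1 := by
          have : ∀ k, u k * y k = u k * x k + (if k = j then ε else 0)
              - (if k = i then ε else 0) := by
            intro k
            by_cases hkj : k = j
            · subst hkj
              have := (hu k).ne'
              simp [hy, Ne.symm hij]
              field_simp
              try ring
            · by_cases hki : k = i
              · subst hki
                have := (hu k).ne'
                simp [hy, hkj]
                field_simp
                try ring
              · simp [hy, hkj, hki]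
          simp only [this, Finset.sum_add_distrib, Finset.sum_sub_distrib,
            Finset.sum_ite_eq', Finset.mem_univ, if_true, hx]
          ring
        have hm := hmin y hynn hysum
        have hsum : ∑ k, u k * (2 * r k * y k + y k ^ 2)
            = (∑ k, u k * (2 * r k * x k + x k ^ 2))
              + (2*ε*(r j + x j) + ε^2/u j)
              + (-(2*ε*(r i + x i)) + ε^2/u i) := by
          have hterm : ∀ k, u k * (2 * r k * y k + y k ^ 2)
              = u k * (2 * r k * x k + x k ^ 2)
                + (if k = j then 2*ε*(r j + x j) + ε^2/u j else 0)
                + (if k = i then -(2*ε*(r i + x i)) + ε^2/u i else 0) := by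
            intro k
            by_cases hkj : k = j
            · subst hkj
              have h0 := (hu k).ne'
              simp [hy, Ne.symm hij]
              field_simp
              ring
            · by_cases hki : k = i
              · subst hki
                have h0 := (hu k).ne'
                simp [hy, hkj]
                field_simp
                ring
              · simp [hy, hkj, hki]
          rw [Finset.sum_congr rfl (fun k _ => hterm k)]
          simp only [Finset.sum_add_distrib, Finset.sum_ite_eq', Finset.mem_univ, if_true]
        rw [hsum] at hm
        have hui := hu i
        have huj := hu j
        have e1 : ε^2/u j = ε^2 * (1/u j) := by ring
        have e2 : ε^2/u i = ε^2 * (1/u i) := by ring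
        nlinarith [hm]
      by_contra hA
      push_neg at hA
      set A : ℝ := (r j + x j) - (r i + x i) with hAdef
      have hAneg : A < 0 := by simp [hAdef]; linarith
      have hC : 0 < 1/u j + 1/u i := add_pos (one_div_pos.mpr (hu j)) (one_div_pos.mpr (hu i))
      set C : ℝ := 1/u j + 1/u i with hCdef
      set ε : ℝ := min (u i * x i) (-A/C) with hεdef
      have hεpos : 0 < ε := by
        apply lt_min
        · exact mul_pos (hu i) hi
        · exact div_pos (by linarith) hC
      have hεle : ε ≤ u i * x i := min_le_left _ _
      have hεC : ε * C ≤ -A := by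
        have h2 : ε ≤ -A/C := min_le_right _ _
        rw [div_eq_mul_inv] at h2
        calc ε * C ≤ (-A * C⁻¹) * C := mul_le_mul_of_nonneg_right h2 hC.le
          _ = -A := by field_simp
      have := h1 ε hεpos hεle
      nlinarith
  -- find an index with positive x
  have hex : ∃ k0, 0 < x k0 := by
    by_contra h
    push_neg at h
    have : ∀ k, x k = 0 := fun k => le_antisymm (h k) (hxpos k)
    simp [this] at hx
  obtain ⟨k0, hk0⟩ := hex
  refine ⟨r k0 + x k0, fun k => ⟨fun hk => le_antisymm (key k k0 hk) (key k0 k hk0), fun hk => ?_⟩⟩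
  have := key k0 k hk0
  rw [hk] at this
  linarith
end

section
/- Let S' ⊆ S be the set of k with r k < ρ', where ρ' = ((∑_{k∈S'} u k r k) + 1)/(∑_{k∈S'} u k). If the distribution x defined by x k = ρ' - r k for k ∈ S' and x k = 0 otherwise satisfies the KKT conditions (r k ≥ ρ' for k ∉ S'), then x is the unique minimizer of φ over nonnegative feasible distributions. -/
open Finset

theorem kkt_sufficiency
    {K : Type*} [Fintype K] [Nonempty K] [DecidableEq K]
    (u r : K → ℝ)
    (hu : ∀ k, 0 < u k)
    (S' : Finset K) (hS'ne : S'.Nonempty)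
    (ρ' : ℝ) (hρ' : ρ' = ((∑ k ∈ S', u k * r k) + 1) / (∑ k ∈ S', u k))
    (hmem : ∀ k ∈ S', r k < ρ')
    (hKKT : ∀ k ∉ S', ρ' ≤ r k)
    (x : K → ℝ) (hxdef : ∀ k, x k = if k ∈ S' then ρ' - r k else 0) :
    (∀ k, 0 ≤ x k) ∧ (∑ k, u k * x k = 1) ∧
    (∀ y : K → ℝ, (∀ k, 0 ≤ y k) → (∑ k, u k * y k = 1) →
      (1 / 2) * (∑ k, u k * (2 * r k * x k + (x k) ^ 2))
        ≤ (1 / 2) * (∑ k, u k * (2 * r k * y k + (y k) ^ 2)) ∧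
      ((1 / 2) * (∑ k, u k * (2 * r k * y k + (y k) ^ 2))
          = (1 / 2) * (∑ k, u k * (2 * r k * x k + (x k) ^ 2)) → y = x)) := by
  have hupos : 0 < ∑ k ∈ S', u k := Finset.sum_pos (fun k _ => hu k) hS'ne
  have hρsum : ρ' * ∑ k ∈ S', u k = (∑ k ∈ S', u k * r k) + 1 := by
    rw [hρ']; field_simp
  have hx0 : ∀ k, 0 ≤ x k := by
    intro k; rw [hxdef k]
    split
    · linarith [hmem k ‹_›]
    · exact le_refl 0
  have hxsum : ∑ k, u k * x k = 1 := by
    have h1 : ∑ k, u k * x k = ∑ k ∈ S', u k * (ρ' - r k) := by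
      rw [← Finset.sum_subset (Finset.subset_univ S')
        (fun k _ hk => by rw [hxdef k, if_neg hk, mul_zero])]
      exact Finset.sum_congr rfl fun k hk => by rw [hxdef k, if_pos hk]
    have h2 : ∑ k ∈ S', u k * (ρ' - r k)
        = ρ' * (∑ k ∈ S', u k) - ∑ k ∈ S', u k * r k := by
      rw [Finset.mul_sum, ← Finset.sum_sub_distrib]
      exact Finset.sum_congr rfl fun k _ => by ring
    rw [h1, h2, hρsum]; ring
  refine ⟨hx0, hxsum, fun y hy0 hysum => ?_⟩
  set A := ∑ k, u k * (r k + x k) * (y k - x k) with hA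
  set B := ∑ k, u k * (y k - x k) ^ 2 with hB
  have hA0 : 0 ≤ A := by
    have hs0 : ∑ k, u k * (y k - x k) = 0 := by
      have : ∑ k, u k * (y k - x k) = (∑ k, u k * y k) - ∑ k, u k * x k := by
        rw [← Finset.sum_sub_distrib]
        exact Finset.sum_congr rfl fun k _ => by ring
      rw [this, hysum, hxsum]; ring
    have h1 : A = (∑ k, u k * (r k + x k - ρ') * (y k - x k))
        + ρ' * ∑ k, u k * (y k - x k) := by
      rw [Finset.mul_sum, ← Finset.sum_add_distrib]
      exact Finset.sum_congr rfl fun k _ => by ring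
    rw [h1, hs0, mul_zero, add_zero]
    apply Finset.sum_nonneg
    intro k _
    by_cases hk : k ∈ S'
    · have hxk : x k = ρ' - r k := by rw [hxdef k, if_pos hk]
      have : r k + x k - ρ' = 0 := by rw [hxk]; ring
      rw [this, mul_zero, zero_mul]
    · have hxk : x k = 0 := by rw [hxdef k, if_neg hk]
      have h1 := hKKT k hk
      have h2 := hy0 k
      rw [hxk]
      have h3 : (0:ℝ) ≤ r k + 0 - ρ' := by linarith
      have h4 : (0:ℝ) ≤ y k - 0 := by linarith
      exact mul_nonneg (mul_nonneg (hu k).le h3) h4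
  have hB0 : 0 ≤ B := Finset.sum_nonneg fun k _ =>
    mul_nonneg (hu k).le (sq_nonneg _)
  have hdiff : (1 / 2) * (∑ k, u k * (2 * r k * y k + (y k) ^ 2))
      - (1 / 2) * (∑ k, u k * (2 * r k * x k + (x k) ^ 2)) = A + (1 / 2) * B := by
    rw [hA, hB, Finset.mul_sum, Finset.mul_sum, Finset.mul_sum,
      ← Finset.sum_sub_distrib, ← Finset.sum_add_distrib]
    exact Finset.sum_congr rfl fun k _ => by ring
  constructor
  · linarith
  · intro heq
    have hBzero : B = 0 := by linarith
    have hall : ∀ k ∈ Finset.univ, u k * (y k - x k) ^ 2 = 0 := by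
      rw [← Finset.sum_eq_zero_iff_of_nonneg
        (fun k _ => mul_nonneg (hu k).le (sq_nonneg _))]
      exact hBzero
    funext k
    have hk := hall k (Finset.mem_univ k)
    have := (hu k).ne'
    have : (y k - x k) ^ 2 = 0 := by
      rcases mul_eq_zero.mp hk with h | h
      · exact absurd h this
      · exact h
    have := pow_eq_zero_iff (n := 2) (by norm_num) |>.mp this
    linarith [sub_eq_zero.mp this]
end
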